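/- arXiv:cs/0408044 — 2 statements merged into one kernel-verified Lean document; each statement's English description precedes it below -/
import Mathlib

section
/- Any structure satisfying the foundational state axioms of the fluent calculus (associativity, commutativity of ∘, decomposition, and state equivalence) satisfies idempotence: z ∘ z = z for every state z. -/
theorem fc_idempotence {S F : Type*} (fl : F → S) (comp : S → S → S)
    (holds : F → S → Prop)
    (holds_def : ∀ (f : F) (z : S), holds f z ↔ ∃ z', z = comp (fl f) z')
    (assoc : ∀ z1 z2 z3 : S, comp (comp z1 z2) z3 = comp z1 (comp z2 z3))
    (comm : ∀ z1 z2 : S, comp z1 z2 = comp z2 z1)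
    (decomp : ∀ (f : F) (z1 z2 : S), holds f (comp z1 z2) → holds f z1 ∨ holds f z2)
    (state_equiv : ∀ z1 z2 : S, (∀ f : F, holds f z1 ↔ holds f z2) → z1 = z2)
    (holds_comp : ∀ (f : F) (z : S), holds f (comp (fl f) z)) :
    ∀ z : S, comp z z = z := by
  intro z
  apply state_equiv
  intro f
  constructor
  · intro h
    rcases decomp f z z h with h' | h' <;> exact h'
  · intro h
    rcases (holds_def f z).mp h with ⟨z', hz⟩
    rw [hz, assoc]
    exact holds_comp f _
end

section
/- Proposition (correctness of negation CHRs, claim 2): in a structure satisfying the foundational state axioms of the fluent calculus including uniqueness-of-names for fluents, for all fluents f, f1 and state z: ¬holds(f, f1 ∘ z) ↔ (f ≠ f1 ∧ ¬holds(f, z)). -/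
theorem fc_not_holds_iff {S F : Type*} (fl : F → S) (comp : S → S → S)
    (holds : F → S → Prop)
    (holds_def : ∀ (f : F) (z : S), holds f z ↔ ∃ z', z = comp (fl f) z')
    (assoc : ∀ z1 z2 z3 : S, comp (comp z1 z2) z3 = comp z1 (comp z2 z3))
    (comm : ∀ z1 z2 : S, comp z1 z2 = comp z2 z1)
    (una : Function.Injective fl)
    (irred : ∀ f1 f : F, holds f1 (fl f) → f1 = f)
    (decomp : ∀ (f : F) (z1 z2 : S), holds f (comp z1 z2) → holds f z1 ∨ holds f z2) :
    ∀ (f f1 : F) (z : S),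
      ¬ holds f (comp (fl f1) z) ↔ (f ≠ f1 ∧ ¬ holds f z) := by
  intro f f1 z
  constructor
  · intro h
    constructor
    · rintro rfl
      exact h ((holds_def f _).2 ⟨z, rfl⟩)
    · intro hz
      obtain ⟨z', hz'⟩ := (holds_def f z).1 hz
      apply h
      refine (holds_def f _).2 ⟨comp (fl f1) z', ?_⟩
      rw [hz', ← assoc, comm (fl f1) (fl f), assoc]
  · rintro ⟨hne, hz⟩ h
    rcases decomp f _ _ h with h1 | h2
    · exact hne (irred f f1 h1)
    · exact hz h2
end
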